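/- Let r ∈ (0,1) and let p ∈ 𝒱_r be represented by measures (μ₁, μ₂) as p = p[r, μ₁, μ₂]. Define p̃(z) := 1 − p(r/z) for z ∈ 𝔸_r. Then p̃ ∈ 𝒱_r, and p̃ = p[r, μ̂₂, μ̂₁], where μ̂ denotes the push-forward of μ under the conjugation map z ↦ conj(z) on the unit circle. -/

import Mathlib

open Complex Set MeasureTheory

/-- The Villat kernel `K_r(z) = 1 + 2 ∑_{k≥1} (z^k − r^{2k} z^{−k})/(1 − r^{2k})`. -/
noncomputable def villatK (r : ℝ) (z : ℂ) : ℂ :=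
  1 + 2 * ∑' k : ℕ,
    ((z ^ (k + 1) - (r : ℂ) ^ (2 * (k + 1)) * z⁻¹ ^ (k + 1)) /
      (1 - (r : ℂ) ^ (2 * (k + 1))))

/-- `p = p[r, μ₁, μ₂]`: the Villat–Stieltjes representation by positive Borel measures
`μ₁, μ₂` on the unit circle with total mass `μ₁(𝕋) + μ₂(𝕋) = 1`. -/
structure IsVillatRep (r : ℝ) (μ₁ μ₂ : Measure ℂ) (p : ℂ → ℂ) : Prop where
  finite₁ : IsFiniteMeasure μ₁
  finite₂ : IsFiniteMeasure μ₂
  circle₁ : μ₁ {ξ : ℂ | ‖ξ‖ ≠ 1} = 0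
  circle₂ : μ₂ {ξ : ℂ | ‖ξ‖ ≠ 1} = 0
  mass : (μ₁ Set.univ).toReal + (μ₂ Set.univ).toReal = 1
  repr : ∀ z : ℂ, r < ‖z‖ → ‖z‖ < 1 →
    p z = (∫ ξ, villatK r (z / ξ) ∂μ₁) + ∫ ξ, (1 - villatK r ((r : ℂ) * ξ / z)) ∂μ₂

section Aux

lemma villat_term_bound (r : ℝ) (hr : r ∈ Ioo (0:ℝ) 1) (u : ℂ)
    (h1 : r < ‖u‖) (h2 : ‖u‖ < 1) (k : ℕ) :
    ‖(u ^ (k + 1) - (r : ℂ) ^ (2 * (k + 1)) * u⁻¹ ^ (k + 1)) /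
      (1 - (r : ℂ) ^ (2 * (k + 1)))‖ ≤
    (‖u‖ ^ (k + 1) + (r ^ 2 / ‖u‖) ^ (k + 1)) / (1 - r ^ 2) := by
  obtain ⟨hr0, hr1⟩ := hr
  have hu0 : 0 < ‖u‖ := lt_trans hr0 h1
  have hrk : r ^ (2 * (k + 1)) ≤ r ^ 2 := pow_le_pow_of_le_one hr0.le hr1.le (by omega)
  have hrkn : 0 ≤ r ^ (2 * (k + 1)) := pow_nonneg hr0.le _
  have hden : ‖(1 : ℂ) - (r : ℂ) ^ (2 * (k + 1))‖ = 1 - r ^ (2 * (k + 1)) := by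
    have h : ((1 - r ^ (2 * (k + 1)) : ℝ) : ℂ) = 1 - (r : ℂ) ^ (2 * (k + 1)) := by push_cast; ring
    rw [← h, Complex.norm_real, Real.norm_eq_abs]
    exact abs_of_nonneg (by nlinarith)
  rw [norm_div, hden]
  have hnum : ‖u ^ (k + 1) - (r : ℂ) ^ (2 * (k + 1)) * u⁻¹ ^ (k + 1)‖ ≤
      ‖u‖ ^ (k + 1) + (r ^ 2 / ‖u‖) ^ (k + 1) := by
    have h2' : ‖(r : ℂ) ^ (2 * (k + 1)) * u⁻¹ ^ (k + 1)‖ = (r ^ 2 / ‖u‖) ^ (k + 1) := by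
      rw [norm_mul, norm_pow, norm_pow, norm_inv, Complex.norm_real, Real.norm_eq_abs,
        abs_of_pos hr0, pow_mul, ← mul_pow, ← div_eq_mul_inv]
    calc ‖u ^ (k + 1) - (r : ℂ) ^ (2 * (k + 1)) * u⁻¹ ^ (k + 1)‖
        ≤ ‖u ^ (k + 1)‖ + ‖(r : ℂ) ^ (2 * (k + 1)) * u⁻¹ ^ (k + 1)‖ := norm_sub_le _ _
      _ = ‖u‖ ^ (k + 1) + (r ^ 2 / ‖u‖) ^ (k + 1) := by rw [norm_pow, h2']
  exact div_le_div₀ (by positivity) hnum (by nlinarith) (by nlinarith)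

lemma villat_bound_summable (r : ℝ) (hr : r ∈ Ioo (0:ℝ) 1) (a : ℝ)
    (h1 : r < a) (h2 : a < 1) :
    Summable fun k : ℕ => (a ^ (k + 1) + (r ^ 2 / a) ^ (k + 1)) / (1 - r ^ 2) := by
  obtain ⟨hr0, hr1⟩ := hr
  have ha0 : 0 < a := lt_trans hr0 h1
  have hb0 : 0 ≤ r ^ 2 / a := by positivity
  have hb1 : r ^ 2 / a < 1 := by rw [div_lt_one ha0]; nlinarith
  have s1 : Summable fun k : ℕ => a ^ (k + 1) :=
    (summable_nat_add_iff 1).mpr (summable_geometric_of_lt_one ha0.le h2)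
  have s2 : Summable fun k : ℕ => (r ^ 2 / a) ^ (k + 1) :=
    (summable_nat_add_iff 1).mpr (summable_geometric_of_lt_one hb0 hb1)
  exact (s1.add s2).div_const _

lemma norm_villatK_le (r : ℝ) (hr : r ∈ Ioo (0:ℝ) 1) (u : ℂ)
    (h1 : r < ‖u‖) (h2 : ‖u‖ < 1) :
    ‖villatK r u‖ ≤
      1 + 2 * ∑' k : ℕ, (‖u‖ ^ (k + 1) + (r ^ 2 / ‖u‖) ^ (k + 1)) / (1 - r ^ 2) := by
  have hb := villat_bound_summable r hr ‖u‖ h1 h2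
  have hterm := villat_term_bound r hr u h1 h2
  have hnorm : Summable fun k : ℕ =>
      ‖(u ^ (k + 1) - (r : ℂ) ^ (2 * (k + 1)) * u⁻¹ ^ (k + 1)) /
        (1 - (r : ℂ) ^ (2 * (k + 1)))‖ :=
    Summable.of_nonneg_of_le (fun k => norm_nonneg _) hterm hb
  calc ‖villatK r u‖ ≤ ‖(1 : ℂ)‖ + ‖(2 : ℂ)‖ * ‖∑' k : ℕ,
        ((u ^ (k + 1) - (r : ℂ) ^ (2 * (k + 1)) * u⁻¹ ^ (k + 1)) /
          (1 - (r : ℂ) ^ (2 * (k + 1))))‖ := by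
        refine le_trans (norm_add_le _ _) ?_
        rw [norm_mul]
    _ ≤ 1 + 2 * ∑' k : ℕ, (‖u‖ ^ (k + 1) + (r ^ 2 / ‖u‖) ^ (k + 1)) / (1 - r ^ 2) := by
        simp only [norm_one, Complex.norm_ofNat]
        gcongr
        exact le_trans (norm_tsum_le_tsum_norm hnorm) (Summable.tsum_le_tsum hterm hnorm hb)

lemma contOn_villatK (r : ℝ) (hr : r ∈ Ioo (0:ℝ) 1) (a : ℝ) (h1 : r < a) (h2 : a < 1)
    (f : ℂ → ℂ) (hf : ContinuousOn f (Metric.sphere (0:ℂ) 1))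
    (hmod : ∀ ξ ∈ Metric.sphere (0:ℂ) 1, ‖f ξ‖ = a) :
    ContinuousOn (fun ξ => villatK r (f ξ)) (Metric.sphere (0:ℂ) 1) := by
  obtain ⟨hr0, hr1⟩ := hr
  have ha0 : 0 < a := lt_trans hr0 h1
  unfold villatK
  refine continuousOn_const.add (continuousOn_const.mul
    (continuousOn_tsum (fun k => ?_) (villat_bound_summable r ⟨hr0, hr1⟩ a h1 h2)
      (fun k ξ hξ => ?_)))
  · have hf0 : ∀ ξ ∈ Metric.sphere (0:ℂ) 1, f ξ ≠ 0 := by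
      intro ξ hξ h
      have := hmod ξ hξ
      rw [h] at this
      simp at this
      exact ha0.ne this
    exact (((hf.pow _).sub (continuousOn_const.mul ((hf.inv₀ hf0).pow _))).div_const _)
  · have := villat_term_bound r ⟨hr0, hr1⟩ (f ξ) (by rw [hmod ξ hξ]; exact h1)
      (by rw [hmod ξ hξ]; exact h2) k
    rwa [hmod ξ hξ] at this

lemma ae_norm_one (μ : Measure ℂ) (hμ : μ {ξ : ℂ | ‖ξ‖ ≠ 1} = 0) :
    ∀ᵐ ξ ∂μ, ‖ξ‖ = 1 := by
  rw [ae_iff]; exact hμ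

lemma integrable_villatK (r : ℝ) (hr : r ∈ Ioo (0:ℝ) 1) (a : ℝ) (h1 : r < a) (h2 : a < 1)
    (f : ℂ → ℂ) (hf : ContinuousOn f (Metric.sphere (0:ℂ) 1))
    (hmod : ∀ ξ ∈ Metric.sphere (0:ℂ) 1, ‖f ξ‖ = a)
    (μ : Measure ℂ) (hfin : IsFiniteMeasure μ) (hμ : μ {ξ : ℂ | ‖ξ‖ ≠ 1} = 0) :
    Integrable (fun ξ => villatK r (f ξ)) μ := by
  haveI := hfin
  have hae : ∀ᵐ ξ ∂μ, ‖ξ‖ = 1 := ae_norm_one μ hμ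
  have hres : μ.restrict (Metric.sphere (0:ℂ) 1) = μ := by
    apply Measure.restrict_eq_self_of_ae_mem
    filter_upwards [hae] with ξ hξ
    rwa [mem_sphere_zero_iff_norm]
  have hasm : AEStronglyMeasurable (fun ξ => villatK r (f ξ)) μ := by
    rw [← hres]
    exact (contOn_villatK r hr a h1 h2 f hf hmod).aestronglyMeasurable
      Metric.isClosed_sphere.measurableSet
  refine Integrable.mono' (integrable_const
    (1 + 2 * ∑' k : ℕ, (a ^ (k + 1) + (r ^ 2 / a) ^ (k + 1)) / (1 - r ^ 2))) hasm ?_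
  filter_upwards [hae] with ξ hξ
  have hm : ‖f ξ‖ = a := hmod ξ (by rwa [mem_sphere_zero_iff_norm])
  have := norm_villatK_le r hr (f ξ) (by rw [hm]; exact h1) (by rw [hm]; exact h2)
  rwa [hm] at this

end Aux

/-- If `p = p[r, μ₁, μ₂] ∈ 𝒱_r`, then `p̃(z) := 1 − p(r/z)` belongs to `𝒱_r` and
`p̃ = p[r, μ̂₂, μ̂₁]`, where `μ̂` is the push-forward of `μ` under `z ↦ conj z`. -/
theorem villat_class_involution
    (r : ℝ) (hr : r ∈ Ioo (0:ℝ) 1) (μ₁ μ₂ : Measure ℂ) (p : ℂ → ℂ)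
    (hp : IsVillatRep r μ₁ μ₂ p) :
    IsVillatRep r (Measure.map (starRingEnd ℂ) μ₂) (Measure.map (starRingEnd ℂ) μ₁)
      (fun z => 1 - p ((r : ℂ) / z)) := by
  obtain ⟨hr0, hr1⟩ := hr
  haveI := hp.finite₁
  haveI := hp.finite₂
  have hconj : Measurable (starRingEnd ℂ) := Complex.continuous_conj.measurable
  have hmset : MeasurableSet {ξ : ℂ | ‖ξ‖ ≠ 1} := by
    have : {ξ : ℂ | ‖ξ‖ ≠ 1} = (Metric.sphere (0:ℂ) 1)ᶜ := by
      ext ξ; simp [mem_sphere_zero_iff_norm]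
    rw [this]
    exact Metric.isClosed_sphere.measurableSet.compl
  have hpre : (starRingEnd ℂ) ⁻¹' {ξ : ℂ | ‖ξ‖ ≠ 1} = {ξ : ℂ | ‖ξ‖ ≠ 1} := by
    ext ξ; simp
  have hfin₁ : IsFiniteMeasure (Measure.map (starRingEnd ℂ) μ₂) := by infer_instance
  have hfin₂ : IsFiniteMeasure (Measure.map (starRingEnd ℂ) μ₁) := by infer_instance
  have hcirc₁ : (Measure.map (starRingEnd ℂ) μ₂) {ξ : ℂ | ‖ξ‖ ≠ 1} = 0 := by
    rw [Measure.map_apply hconj hmset, hpre]; exact hp.circle₂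
  have hcirc₂ : (Measure.map (starRingEnd ℂ) μ₁) {ξ : ℂ | ‖ξ‖ ≠ 1} = 0 := by
    rw [Measure.map_apply hconj hmset, hpre]; exact hp.circle₁
  have huniv₁ : (Measure.map (starRingEnd ℂ) μ₂) Set.univ = μ₂ Set.univ := by
    rw [Measure.map_apply hconj MeasurableSet.univ, Set.preimage_univ]
  have huniv₂ : (Measure.map (starRingEnd ℂ) μ₁) Set.univ = μ₁ Set.univ := by
    rw [Measure.map_apply hconj MeasurableSet.univ, Set.preimage_univ]
  refine ⟨hfin₁, hfin₂, hcirc₁, hcirc₂, by rw [huniv₁, huniv₂, add_comm]; exact hp.mass, ?_⟩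
  intro z hz1 hz2
  have hzn : 0 < ‖z‖ := lt_trans hr0 hz1
  have hz0 : z ≠ 0 := by intro h; rw [h] at hzn; simp at hzn
  have hrC : (r : ℂ) ≠ 0 := Complex.ofReal_ne_zero.mpr hr0.ne'
  set w : ℂ := (r : ℂ) / z with hw
  have hwn : ‖w‖ = r / ‖z‖ := by
    rw [hw, norm_div, Complex.norm_real, Real.norm_eq_abs, abs_of_pos hr0]
  have hw1 : r < ‖w‖ := by rw [hwn, lt_div_iff₀ hzn]; nlinarith
  have hw2 : ‖w‖ < 1 := by rw [hwn, div_lt_one hzn]; exact hz1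
  have key₂ : ∀ ξ : ℂ, (r : ℂ) * ξ / w = z * ξ := by
    intro ξ; rw [hw]; field_simp
  have key₁ : ∀ ξ : ℂ, (r : ℂ) * ξ⁻¹ / z = w / ξ := by
    intro ξ; rw [div_eq_mul_inv w ξ, hw]; ring
  have hsne : ∀ ξ ∈ Metric.sphere (0:ℂ) 1, ξ ≠ 0 := by
    intro ξ hξ h
    rw [mem_sphere_zero_iff_norm, h] at hξ; simp at hξ
  have hcont_div : ∀ a : ℂ, ContinuousOn (fun ξ : ℂ => a / ξ) (Metric.sphere (0:ℂ) 1) :=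
    fun a => continuousOn_const.div continuousOn_id hsne
  have hmod_div : ∀ a : ℂ, ∀ ξ ∈ Metric.sphere (0:ℂ) 1, ‖a / ξ‖ = ‖a‖ := by
    intro a ξ hξ
    rw [mem_sphere_zero_iff_norm] at hξ
    rw [norm_div, hξ, div_one]
  have hmod_mul : ∀ a : ℂ, ∀ ξ ∈ Metric.sphere (0:ℂ) 1, ‖a * ξ‖ = ‖a‖ := by
    intro a ξ hξ
    rw [mem_sphere_zero_iff_norm] at hξ
    rw [norm_mul, hξ, mul_one]
  have hint_g₂ : Integrable (fun ξ => villatK r (z * ξ)) μ₂ :=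
    integrable_villatK r ⟨hr0, hr1⟩ ‖z‖ hz1 hz2 _
      (continuousOn_const.mul continuousOn_id) (hmod_mul z) μ₂ hp.finite₂ hp.circle₂
  have hint_A : Integrable (fun ξ => villatK r (w / ξ)) μ₁ :=
    integrable_villatK r ⟨hr0, hr1⟩ ‖w‖ hw1 hw2 _ (hcont_div w) (hmod_div w)
      μ₁ hp.finite₁ hp.circle₁
  have hint_I1 : Integrable (fun ξ => villatK r (z / ξ)) (Measure.map (starRingEnd ℂ) μ₂) :=
    integrable_villatK r ⟨hr0, hr1⟩ ‖z‖ hz1 hz2 _ (hcont_div z) (hmod_div z)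
      _ hfin₁ hcirc₁
  have hint_I2 : Integrable (fun ξ => villatK r ((r : ℂ) * ξ / z))
      (Measure.map (starRingEnd ℂ) μ₁) := by
    refine integrable_villatK r ⟨hr0, hr1⟩ ‖w‖ hw1 hw2 (fun ξ => (r : ℂ) * ξ / z)
      ?_ ?_ _ hfin₂ hcirc₂
    · exact ((continuousOn_const.mul continuousOn_id).div_const z)
    · intro ξ hξ
      rw [mem_sphere_zero_iff_norm] at hξ
      rw [hwn, norm_div, norm_mul, hξ, mul_one, Complex.norm_real, Real.norm_eq_abs,
        abs_of_pos hr0]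
  have hconj_inv : ∀ ξ : ℂ, ‖ξ‖ = 1 → (starRingEnd ℂ) ξ = ξ⁻¹ := by
    intro ξ hξ
    refine eq_inv_of_mul_eq_one_left ?_
    rw [mul_comm, Complex.mul_conj, Complex.normSq_eq_norm_sq, hξ]
    norm_num
  have hI1 : (∫ ξ, villatK r (z / ξ) ∂(Measure.map (starRingEnd ℂ) μ₂)) =
      ∫ ξ, villatK r (z * ξ) ∂μ₂ := by
    rw [integral_map hconj.aemeasurable hint_I1.aestronglyMeasurable]
    refine integral_congr_ae ?_
    filter_upwards [ae_norm_one μ₂ hp.circle₂] with ξ hξ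
    rw [hconj_inv ξ hξ, div_eq_mul_inv, inv_inv]
  have hI2 : (∫ ξ, (1 - villatK r ((r : ℂ) * ξ / z)) ∂(Measure.map (starRingEnd ℂ) μ₁)) =
      ∫ ξ, (1 - villatK r (w / ξ)) ∂μ₁ := by
    have hsm : AEStronglyMeasurable (fun ξ => (1:ℂ) - villatK r ((r:ℂ) * ξ / z))
        (Measure.map (starRingEnd ℂ) μ₁) := by
      exact aestronglyMeasurable_const.sub hint_I2.aestronglyMeasurable
    rw [integral_map hconj.aemeasurable hsm]
    refine integral_congr_ae ?_
    filter_upwards [ae_norm_one μ₁ hp.circle₁] with ξ hξ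
    rw [hconj_inv ξ hξ, key₁]
  have hrepr := hp.repr w hw1 hw2
  have hB : (∫ ξ, (1 - villatK r ((r : ℂ) * ξ / w)) ∂μ₂) =
      ((μ₂ Set.univ).toReal : ℂ) - ∫ ξ, villatK r (z * ξ) ∂μ₂ := by
    simp only [key₂]
    rw [integral_sub (integrable_const 1) hint_g₂, integral_const]
    simp
    rfl
  have hA : (∫ ξ, (1 - villatK r (w / ξ)) ∂μ₁) =
      ((μ₁ Set.univ).toReal : ℂ) - ∫ ξ, villatK r (w / ξ) ∂μ₁ := by
    rw [integral_sub (integrable_const 1) hint_A, integral_const]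
    simp
    rfl
  have hmass := hp.mass
  show (1 : ℂ) - p w = _
  rw [hI1, hI2, hrepr, hA, hB]
  have hone : ((μ₁ Set.univ).toReal : ℂ) + ((μ₂ Set.univ).toReal : ℂ) = 1 := by
    rw [← Complex.ofReal_add, hmass, Complex.ofReal_one]
  linear_combination -hone
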